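/- Let a_1 < ... < a_n be integers with a_n − a_1 ≥ 4, and let R = ℤ[x]/((x−a_1)⋯(x−a_n)). Then the unit group of R is {1, −1}. -/

import Mathlib

open Polynomial

lemma prod_X_sub_C_dvd_of_eval_zero (s : Finset ℤ) (g : ℤ[X])
    (h : ∀ i ∈ s, g.eval i = 0) : (∏ i ∈ s, (X - C i)) ∣ g := by
  classical
  induction s using Finset.induction_on generalizing g with
  | empty => simp
  | @insert c s hc ih =>
    have hgc : (X - C c) ∣ g :=
      dvd_iff_isRoot.mpr (h c (Finset.mem_insert_self _ _))
    obtain ⟨g1, hg1⟩ := hgc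
    have h1 : ∀ i ∈ s, g1.eval i = 0 := by
      intro i hi
      have hig : g.eval i = 0 := h i (Finset.mem_insert_of_mem hi)
      rw [hg1, eval_mul, eval_sub, eval_X, eval_C] at hig
      have hne : i - c ≠ 0 := sub_ne_zero.mpr (by rintro rfl; exact hc hi)
      exact (mul_eq_zero.mp hig).resolve_left hne
    rw [Finset.prod_insert hc, hg1]
    exact mul_dvd_mul_left _ (ih g1 h1)

lemma aux_dvd2 {d u v : ℤ} (hu : u = 1 ∨ u = -1) (hv : v = 1 ∨ v = -1)
    (hne : u ≠ v) (h : d ∣ u - v) : d ∣ 2 := by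
  have h2 : u - v = 2 ∨ u - v = -2 := by omega
  rcases h2 with h2 | h2
  · rwa [h2] at h
  · rw [h2] at h; exact dvd_neg.mp h

/-- If `a 0 < ⋯ < a n` are integers with `a n - a 0 ≥ 4`, then the units of
`R = ℤ[x]/((x - a 0)⋯(x - a n))` are exactly `1` and `-1`. -/
theorem stmt_11 (n : ℕ) (a : Fin (n + 1) → ℤ) (ha : StrictMono a)
    (h4 : a (Fin.last n) - a 0 ≥ 4) :
    ∀ x : ℤ[X] ⧸ Ideal.span {∏ i, (X - C (a i))},
      IsUnit x ↔ x = 1 ∨ x = -1 := by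
  classical
  intro x
  constructor
  · intro hx
    obtain ⟨f, rfl⟩ := Ideal.Quotient.mk_surjective x
    obtain ⟨y, hy⟩ := hx.exists_right_inv
    obtain ⟨g, rfl⟩ := Ideal.Quotient.mk_surjective y
    have hdvd : (∏ i, (X - C (a i))) ∣ f * g - 1 := by
      rw [← Ideal.mem_span_singleton, ← Ideal.Quotient.eq_zero_iff_mem,
        map_sub, map_mul, map_one, hy, sub_self]
    have hval : ∀ i, f.eval (a i) = 1 ∨ f.eval (a i) = -1 := by
      intro i
      have hχ0 : (∏ j, (X - C (a j))).eval (a i) = 0 := by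
        rw [eval_prod]
        exact Finset.prod_eq_zero (Finset.mem_univ i) (by simp)
      obtain ⟨r, hr⟩ := hdvd
      have heval := congrArg (Polynomial.eval (a i)) hr
      rw [eval_mul, hχ0, zero_mul, eval_sub, eval_mul, eval_one] at heval
      exact Int.isUnit_iff.mp (IsUnit.of_mul_eq_one _ (by linarith))
    set ε : ℤ := f.eval (a 0) with hε
    -- the value at the last point equals ε
    have hlast : f.eval (a (Fin.last n)) = ε := by
      by_contra hne
      have hD : a (Fin.last n) - a 0 ∣ 2 :=
        aux_dvd2 (hval (Fin.last n)) (hval 0) hne (sub_dvd_eval_sub _ _ f)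
      have := Int.le_of_dvd (by norm_num) hD
      omega
    -- all values equal ε
    have hall : ∀ i, f.eval (a i) = ε := by
      intro i
      by_contra hne
      have hi0 : (0 : Fin (n+1)) < i := by
        rcases eq_or_ne i 0 with rfl | h
        · exact absurd hε.symm hne
        · exact Fin.pos_of_ne_zero h
      have hil : i < Fin.last n := by
        rcases eq_or_ne i (Fin.last n) with rfl | h
        · exact absurd hlast hne
        · exact lt_of_le_of_ne (Fin.le_last i) h
      have ha0i : a 0 < a i := ha hi0
      have hail : a i < a (Fin.last n) := ha hil
      have hd1 : a i - a 0 ∣ 2 :=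
        aux_dvd2 (hval i) (hval 0) hne (sub_dvd_eval_sub _ _ f)
      have hd2 : a (Fin.last n) - a i ∣ 2 :=
        aux_dvd2 (hval (Fin.last n)) (hval i) (by rw [hlast]; exact fun h => hne h.symm)
          (sub_dvd_eval_sub _ _ f)
      have hle1 : a i - a 0 ≤ 2 := Int.le_of_dvd (by norm_num) hd1
      have hle2 : a (Fin.last n) - a i ≤ 2 := Int.le_of_dvd (by norm_num) hd2
      have hib : a i = a 0 + 2 := by omega
      have hlb : a (Fin.last n) = a 0 + 4 := by omega
      -- three point contradiction: values ε, -ε, ε at b, b+2, b+4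
      have hεε : ε * ε = 1 := by rcases hval 0 with h | h <;> rw [← hε] at h <;> rw [h] <;> ring
      have hmid : f.eval (a 0 + 2) = -ε := by
        rw [← hib]
        rcases hval i with h | h <;> rcases hval 0 with h0 | h0 <;>
          rw [← hε] at h0 <;> omega
      set P : ℤ[X] := C ε * f - 1 with hP
      have hPb : P.eval (a 0) = 0 := by
        rw [hP]; simp [← hε, hεε]
      have hPd : P.eval (a 0 + 4) = 0 := by
        rw [hP]; simp only [eval_sub, eval_mul, eval_C, eval_one]
        rw [← hlb, hlast, hεε]; ring
      have hPc : P.eval (a 0 + 2) = -2 := by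
        rw [hP]; simp only [eval_sub, eval_mul, eval_C, eval_one]
        rw [hmid]
        have : ε * -ε = -1 := by rw [mul_neg, hεε]
        rw [this]; ring
      obtain ⟨Q, hQ⟩ := dvd_iff_isRoot.mpr hPb
      have hQd : Q.eval (a 0 + 4) = 0 := by
        have := hPd
        rw [hQ, eval_mul, eval_sub, eval_X, eval_C] at this
        have h4' : a 0 + 4 - a 0 = 4 := by ring
        rw [h4'] at this
        omega
      obtain ⟨K, hK⟩ := dvd_iff_isRoot.mpr hQd
      have := hPc
      rw [hQ, hK, eval_mul, eval_mul, eval_sub, eval_sub, eval_X, eval_C, eval_C] at this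
      have e1 : a 0 + 2 - a 0 = 2 := by ring
      have e2 : a 0 + 2 - (a 0 + 4) = -2 := by ring
      rw [e1, e2] at this
      omega
    -- conclude χ ∣ f - C ε
    have hchi : (∏ i, (X - C (a i))) ∣ f - C ε := by
      have hprod : (∏ i, (X - C (a i))) = ∏ t ∈ Finset.image a Finset.univ, (X - C t) := by
        rw [Finset.prod_image (fun i _ j _ h => ha.injective h)]
      rw [hprod]
      apply prod_X_sub_C_dvd_of_eval_zero
      intro t ht
      obtain ⟨i, -, rfl⟩ := Finset.mem_image.mp ht
      rw [eval_sub, eval_C, hall i, sub_self]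
    have hmk : Ideal.Quotient.mk (Ideal.span {∏ i, (X - C (a i))}) f
        = Ideal.Quotient.mk _ (C ε) :=
      Ideal.Quotient.eq.mpr (Ideal.mem_span_singleton.mpr hchi)
    rcases hval 0 with h | h <;> rw [← hε] at h
    · left; rw [hmk, h, map_one, map_one]
    · right; rw [hmk, h, map_neg, map_one, map_neg, map_one]
  · rintro (rfl | rfl)
    · exact isUnit_one
    · exact IsUnit.of_mul_eq_one (-1) (by ring)
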